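/- Conditional domestic–foreign option duality (probabilistic form of the Lemma): let (Ω, F, P) be a probability space, let X : Ω → ℝ be measurable with X > 0 P-almost surely and ∫ X dP = 1, let Q = P.withDensity(X), and let G ⊆ F be a sub-σ-algebra. Then for every real K > 0, P-almost surely: E_P[max(X − K, 0) | G] = K · E_P[X | G] · E_Q[max(1/K − 1/X, 0) | G], where E_P[· | G] and E_Q[· | G] denote conditional expectations with respect to G under P and Q respectively. -/

import Mathlib

open MeasureTheory ENNReal

/-- Conditional domestic–foreign option duality. -/
theorem conditional_domestic_foreign_duality
    {Ω : Type*} {mF : MeasurableSpace Ω} (P : Measure Ω) [IsProbabilityMeasure P]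
    (X : Ω → ℝ) (hX : Measurable X) (hXpos : ∀ᵐ ω ∂P, 0 < X ω)
    (hXint : ∫ ω, X ω ∂P = 1)
    (Q : Measure Ω) (hQ : Q = P.withDensity (fun ω => ENNReal.ofReal (X ω)))
    (G : MeasurableSpace Ω) (hG : G ≤ mF)
    (K : ℝ) (hK : 0 < K) :
    ∀ᵐ ω ∂P,
      (P[fun ω => max (X ω - K) 0|G]) ω =
        K * (P[X|G]) ω * (Q[fun ω => max (1 / K - 1 / X ω) 0|G]) ω := by
  -- basic integrability of X
  have hXintgr : Integrable X P := by
    by_contra h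
    rw [integral_undef h] at hXint
    norm_num at hXint
  have hQP : Q ≪ P := hQ ▸ withDensity_absolutelyContinuous P _
  have hPQ : P ≪ Q := by
    rw [hQ]
    exact withDensity_absolutelyContinuous' hX.ennreal_ofReal.aemeasurable
      (hXpos.mono fun ω h => by simp [ENNReal.ofReal_eq_zero, not_le, h])
  haveI hQprob : IsProbabilityMeasure Q := by
    constructor
    rw [hQ, withDensity_apply _ MeasurableSet.univ, Measure.restrict_univ,
      ← ofReal_integral_eq_lintegral_ofReal hXintgr (hXpos.mono fun _ h => h.le), hXint,
      ENNReal.ofReal_one]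
  set Y : Ω → ℝ := fun ω => max (1 / K - 1 / X ω) 0 with hYdef
  have hYmeas : Measurable[mF] Y := by
    apply Measurable.max _ measurable_const
    exact measurable_const.sub (measurable_const.div hX)
  have hY0 : ∀ ω, 0 ≤ Y ω := fun ω => le_max_right _ _
  have hYleP : ∀ᵐ ω ∂P, Y ω ≤ 1 / K := by
    filter_upwards [hXpos] with ω hω
    exact max_le (sub_le_self _ (by positivity)) (by positivity)
  have hYleQ : ∀ᵐ ω ∂Q, Y ω ≤ 1 / K := hQP.ae_le hYleP
  have hYintQ : Integrable Y Q := by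
    refine Integrable.mono' (integrable_const (1 / K)) hYmeas.aestronglyMeasurable ?_
    filter_upwards [hYleQ] with ω hω
    rw [Real.norm_of_nonneg (hY0 ω)]; exact hω
  set h : Ω → ℝ := Q[Y|G] with hhdef
  have sm_h : StronglyMeasurable[G] h := stronglyMeasurable_condExp
  have hh0Q : ∀ᵐ ω ∂Q, 0 ≤ h ω := condExp_nonneg (Filter.Eventually.of_forall hY0)
  have hhleQ : ∀ᵐ ω ∂Q, h ω ≤ 1 / K := by
    have := condExp_mono (μ := Q) (m := G) hYintQ (integrable_const (1 / K)) hYleQ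
    filter_upwards [this] with ω hω
    rwa [condExp_const hG] at hω
  have hhboundP : ∀ᵐ ω ∂P, ‖h ω‖ ≤ 1 / K := by
    filter_upwards [hPQ.ae_le hh0Q, hPQ.ae_le hhleQ] with ω h0 h1
    rw [Real.norm_of_nonneg h0]; exact h1
  set cX : Ω → ℝ := P[X|G] with hcXdef
  have sm_h' : StronglyMeasurable[mF] h := sm_h.mono hG
  have sm_cX' : StronglyMeasurable[mF] cX := stronglyMeasurable_condExp.mono hG
  have hcXint : Integrable cX P := integrable_condExp
  have hXt : Measurable[mF] (fun ω => (X ω).toNNReal) := hX.real_toNNReal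
  -- integrability facts
  have hXYint : Integrable (fun ω => X ω * Y ω) P := by
    refine Integrable.mono' (hXintgr.abs.mul_const (1 / K)) (hX.mul hYmeas).aestronglyMeasurable ?_
    filter_upwards [hYleP] with ω hω
    rw [Real.norm_eq_abs, abs_mul, abs_of_nonneg (hY0 ω)]
    exact mul_le_mul_of_nonneg_left hω (abs_nonneg _)
  have hhXint : Integrable (h * X) P := by
    refine Integrable.mono' (hXintgr.abs.const_mul (1 / K))
      (sm_h'.aestronglyMeasurable.mul hX.aestronglyMeasurable) ?_
    filter_upwards [hhboundP] with ω hω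
    rw [Pi.mul_apply, Real.norm_eq_abs, abs_mul]
    exact mul_le_mul_of_nonneg_right (by rwa [← Real.norm_eq_abs]) (abs_nonneg _)
  -- the key identity: P[X*Y|G] = cX * h a.e.
  have key : (fun ω => cX ω * h ω) =ᵐ[P] P[fun ω => X ω * Y ω|G] := by
    refine ae_eq_condExp_of_forall_setIntegral_eq hG hXYint ?_ ?_ ?_
    · intro s hs hμs
      refine Integrable.integrableOn (s := s) ?_
      refine Integrable.mono' (μ := P) (hcXint.abs.mul_const (1 / K))
        (sm_cX'.aestronglyMeasurable.mul sm_h'.aestronglyMeasurable) ?_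
      filter_upwards [hhboundP] with ω hω
      rw [Real.norm_eq_abs, abs_mul]
      exact mul_le_mul_of_nonneg_left (by rwa [← Real.norm_eq_abs]) (abs_nonneg _)
    · intro s hs hμs
      have hsm : MeasurableSet[mF] s := hG s hs
      have e1 : ∫ ω in s, X ω * Y ω ∂P = ∫ ω in s, Y ω ∂Q := by
        rw [hQ]
        have : (fun ω => ENNReal.ofReal (X ω)) = fun ω => ((X ω).toNNReal : ℝ≥0∞) := rfl
        rw [this, @setIntegral_withDensity_eq_setIntegral_smul Ω ℝ mF P _ _ _ hXt Y s hsm]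
        refine @setIntegral_congr_ae Ω ℝ mF _ _ _ _ s P hsm ?_
        filter_upwards [hXpos] with ω hω _
        simp [NNReal.smul_def, Real.coe_toNNReal _ hω.le]
      have e2 : ∫ ω in s, Y ω ∂Q = ∫ ω in s, h ω ∂Q := (setIntegral_condExp hG hYintQ hs).symm
      have e3 : ∫ ω in s, h ω ∂Q = ∫ ω in s, (h * X) ω ∂P := by
        rw [hQ]
        have : (fun ω => ENNReal.ofReal (X ω)) = fun ω => ((X ω).toNNReal : ℝ≥0∞) := rfl
        rw [this, @setIntegral_withDensity_eq_setIntegral_smul Ω ℝ mF P _ _ _ hXt h s hsm]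
        refine @setIntegral_congr_ae Ω ℝ mF _ _ _ _ s P hsm ?_
        filter_upwards [hXpos] with ω hω _
        simp [NNReal.smul_def, Real.coe_toNNReal _ hω.le, mul_comm]
      have e4 : ∫ ω in s, (h * X) ω ∂P = ∫ ω in s, cX ω * h ω ∂P := by
        rw [← setIntegral_condExp hG hhXint hs]
        refine @setIntegral_congr_ae Ω ℝ mF _ _ _ _ s P hsm ?_
        filter_upwards [condExp_mul_of_stronglyMeasurable_left sm_h hhXint hXintgr] with ω hω _
        rw [hω, Pi.mul_apply, mul_comm]
      rw [e1, e2, e3, e4]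
    · exact ((stronglyMeasurable_condExp.mul sm_h).aestronglyMeasurable)
  -- pointwise payoff identity
  have hpoint : (fun ω => max (X ω - K) 0) =ᵐ[P] fun ω => K • (fun ω => X ω * Y ω) ω := by
    filter_upwards [hXpos] with ω hω
    have hKX : 0 ≤ K * X ω := by positivity
    simp only [smul_eq_mul, hYdef, ← mul_assoc]
    rw [mul_max_of_nonneg _ _ hKX, mul_zero]
    congr 1
    field_simp
  have step1 : P[fun ω => max (X ω - K) 0|G] =ᵐ[P] K • P[fun ω => X ω * Y ω|G] :=
    (condExp_congr_ae hpoint).trans (condExp_smul K _ G)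
  filter_upwards [step1, key] with ω h1 h2
  rw [h1, Pi.smul_apply, smul_eq_mul, ← h2, mul_assoc]
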